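/- Let 𝓒 be an algebra of real-valued functions on H that is closed under composition with every function b ∈ 𝓑. Then the following alternative holds: either 𝓒 is not contained in the set 𝓞 of hidden observables, or the family of operators σ(𝓒) = {σ(f) : f ∈ 𝓒} is commutative, i.e. σ(f)·σ(g) = σ(g)·σ(f) for all f, g ∈ 𝓒. -/

import Mathlib

open MeasureTheory

noncomputable section

namespace HiddenVar

variable {H : Type*} [NormedAddCommGroup H] [InnerProductSpace ℂ H] [CompleteSpace H]

/-- `η` is an admissible hidden-state measure on `ℂ`: a Borel probability measure without
atoms which is invariant under every rotation `z ↦ e^{iθ}·z`. -/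
def IsEta (η : Measure ℂ) : Prop :=
  IsProbabilityMeasure η ∧ NoAtoms η ∧
    ∀ θ : ℝ, Measure.map (fun z : ℂ => Complex.exp (θ * Complex.I) * z) η = η

/-- A subset `A ⊆ H` is pseudo-Borel if its intersection with every complex line is Borel;
equivalently, its preimage under `z ↦ z • ψ` is Borel in `ℂ` for every unit vector `ψ`. -/
def PseudoBorel (A : Set H) : Prop :=
  ∀ ψ : H, ‖ψ‖ = 1 → MeasurableSet ((fun z : ℂ => z • ψ) ⁻¹' A)

/-- A function `f : H → ℝ` is pseudo-Borel if `f ⁻¹' B` is pseudo-Borel for every Borel `B`. -/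
def PseudoBorelFun (f : H → ℝ) : Prop :=
  ∀ B : Set ℝ, MeasurableSet B → PseudoBorel (f ⁻¹' B)

/-- The pseudo-Borel σ-algebra on `H`. -/
def pseudoBorelSigma (H : Type*) [NormedAddCommGroup H] [InnerProductSpace ℂ H] :
    MeasurableSpace H where
  MeasurableSet' := PseudoBorel
  measurableSet_empty := fun ψ _ => by simp
  measurableSet_compl := fun A hA ψ hψ => by
    rw [Set.preimage_compl]; exact (hA ψ hψ).compl
  measurableSet_iUnion := fun s hs ψ hψ => by
    rw [Set.preimage_iUnion]; exact MeasurableSet.iUnion fun i => hs i ψ hψ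

/-- The mass that the canonical measure on the complex line through the unit vector `ψ`
gives to (the trace on that line of) the set `A`. -/
def lineMass (η : Measure ℂ) (ψ : H) (A : Set H) : ENNReal :=
  η ((fun z : ℂ => z • ψ) ⁻¹' A)

/-- A measure-zero pseudo-Borel subset of `H` : it meets every complex line in a null set. -/
def NullPB (η : Measure ℂ) (A : Set H) : Prop :=
  PseudoBorel A ∧ ∀ ψ : H, ‖ψ‖ = 1 → lineMass η ψ A = 0

/-- `f` is essentially bounded: bounded outside a measure-zero pseudo-Borel set. -/
def EssBddPB (η : Measure ℂ) (f : H → ℝ) : Prop :=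
  ∃ N : Set H, NullPB η N ∧ ∃ C : ℝ, ∀ x ∉ N, |f x| ≤ C

/-- The expectation value `⟨T⟩_ψ = ⟨Tψ, ψ⟩` of a (self-adjoint) operator at `ψ`. -/
def expVal (T : H →L[ℂ] H) (ψ : H) : ℝ :=
  (@inner ℂ _ _ ψ (T ψ)).re

/-- The integral `∫_{ℂ·ψ} f dη_{ℂ·ψ}` of `f` over the complex line through the unit
vector `ψ`, with respect to the canonical copy of `η` on that line. -/
def lineIntegral (η : Measure ℂ) (f : H → ℝ) (ψ : H) : ℝ :=
  ∫ z : ℂ, f (z • ψ) ∂η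

/-- `f` is an essentially bounded pseudo-Borel function with orthodox mean values, with
(necessarily unique) associated bounded self-adjoint operator `T = σ(f)`. -/
def OrthodoxMean (η : Measure ℂ) (f : H → ℝ) (T : H →L[ℂ] H) : Prop :=
  PseudoBorelFun f ∧ EssBddPB η f ∧ IsSelfAdjoint T ∧
    ∀ ψ : H, ‖ψ‖ = 1 → lineIntegral η f ψ = expVal T ψ

/-- `b ∈ 𝓑` : Borel functions `ℝ → ℝ` mapping bounded sets to bounded sets. -/
def MemB (b : ℝ → ℝ) : Prop :=
  Measurable b ∧ ∀ s : Set ℝ, Bornology.IsBounded s → Bornology.IsBounded (b '' s)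

/-- `ν` is the spectral (scalar) measure of the bounded self-adjoint operator `T` at the
unit vector `ψ`: the unique probability measure supported in `[-‖T‖, ‖T‖]` whose moments
are the expectation values `⟨Tⁿ⟩_ψ`. -/
def IsSpecMeasure (T : H →L[ℂ] H) (ψ : H) (ν : Measure ℝ) : Prop :=
  IsProbabilityMeasure ν ∧ ν (Set.Icc (-‖T‖) ‖T‖)ᶜ = 0 ∧
    ∀ n : ℕ, ∫ r, r ^ n ∂ν = expVal (T ^ n) ψ

/-- `S = b(T)` : the Borel functional calculus of the bounded self-adjoint operator `T` at
the Borel function `b`, characterized by `⟨b(T)⟩_ψ = ∫ b dν_ψ` against the spectral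
measures `ν_ψ` of `T`. -/
def IsBFC (b : ℝ → ℝ) (T S : H →L[ℂ] H) : Prop :=
  IsSelfAdjoint S ∧ ∀ ψ : H, ‖ψ‖ = 1 → ∀ ν : Measure ℝ, IsSpecMeasure T ψ ν →
    ∫ r, b r ∂ν = expVal S ψ

/-- `f` is a hidden observable with `σ(f) = T`: `f` has orthodox mean values with operator
`T` and for every `b ∈ 𝓑` the composition `b ∘ f` has orthodox mean values with operator
`b(σ(f))`. -/
def HiddenObs (η : Measure ℂ) (f : H → ℝ) (T : H →L[ℂ] H) : Prop :=
  OrthodoxMean η f T ∧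
    ∀ b : ℝ → ℝ, MemB b → ∃ S : H →L[ℂ] H, IsBFC b T S ∧ OrthodoxMean η (b ∘ f) S

/-- `f` is a hidden observable (member of `𝓞`). -/
def IsHiddenObs (η : Measure ℂ) (f : H → ℝ) : Prop :=
  ∃ T : H →L[ℂ] H, HiddenObs η f T

/-- The characteristic function `χ_L` of a subset of `H`. -/
def chi (L : Set H) : H → ℝ :=
  Set.indicator L fun _ => (1 : ℝ)

/-- `L` is a hidden proposition with `σ(χ_L) = E`. -/
def HiddenProp (η : Measure ℂ) (L : Set H) (E : H →L[ℂ] H) : Prop :=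
  HiddenObs η (chi L) E

/-- `L` is a hidden proposition. -/
def IsHiddenProp (η : Measure ℂ) (L : Set H) : Prop :=
  ∃ E : H →L[ℂ] H, HiddenProp η L E

/-- `E` is an orthogonal projection of `H`. -/
def IsProjection (E : H →L[ℂ] H) : Prop :=
  IsSelfAdjoint E ∧ E * E = E

/-- The orthogonal projection onto the complex line `ℂ·ψ` spanned by a unit vector. -/
def projLine (ψ : H) : H →L[ℂ] H :=
  (innerSL ℂ ψ).smulRight ψ

/-- `HasTrace S t` : the operator `S` is trace class with trace `t`; the series
`Σ ⟪e_k, S e_k⟫` converges to `t` for every Hilbert basis. -/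
def HasTrace (S : H →L[ℂ] H) (t : ℂ) : Prop :=
  ∀ b : HilbertBasis ℕ ℂ H, HasSum (fun k => (@inner ℂ _ _ (b k) (S (b k)))) t

/-- `D` is a density matrix: a positive trace-class operator of trace one, i.e.
`D = Σ w_k·P_{ψ_k}` for some Hilbert basis `{ψ_k}` and weights `w_k ≥ 0` with `Σ w_k = 1`. -/
def IsDensityMatrix (D : H →L[ℂ] H) : Prop :=
  ∃ (b : HilbertBasis ℕ ℂ H) (w : ℕ → ℝ), (∀ k, 0 ≤ w k) ∧ HasSum w 1 ∧
    HasSum (fun k => (w k : ℂ) • projLine (b k)) D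

/-- A hidden mixed state: a probability measure on the pseudo-Borel σ-algebra of `H`
giving the same mass to hidden propositions having the same trace-measure on every
complex line. -/
def HiddenMixed (η : Measure ℂ) (μ : @Measure H (pseudoBorelSigma H)) : Prop :=
  IsProbabilityMeasure μ ∧
    ∀ L M : Set H, IsHiddenProp η L → IsHiddenProp η M →
      (∀ ψ : H, ‖ψ‖ = 1 → lineMass η ψ L = lineMass η ψ M) → μ L = μ M

/-- `D = δ(μ)` : `D` is the density matrix associated to the hidden mixed state `μ`,
characterized by `μ(L) = Trace[σ(χ_L)·D]` for every hidden proposition `L`. -/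
def IsDelta (η : Measure ℂ) (μ : @Measure H (pseudoBorelSigma H)) (D : H →L[ℂ] H) : Prop :=
  IsDensityMatrix D ∧
    ∀ (L : Set H) (E : H →L[ℂ] H), HiddenProp η L E →
      HasTrace (E ∘L D) (((μ L).toReal : ℂ))


section KS


private def dlt (A : H →L[ℂ] H) : (H →L[ℂ] H) → (H →L[ℂ] H) := fun X => A * X - X * A

private lemma dlt_norm (A X : H →L[ℂ] H) : ‖dlt A X‖ ≤ 2 * ‖A‖ * ‖X‖ := by
  have h1 : ‖A * X‖ ≤ ‖A‖ * ‖X‖ := norm_mul_le _ _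
  have h2 : ‖X * A‖ ≤ ‖X‖ * ‖A‖ := norm_mul_le _ _
  calc ‖A * X - X * A‖ ≤ ‖A * X‖ + ‖X * A‖ := norm_sub_le _ _
    _ ≤ 2 * ‖A‖ * ‖X‖ := by nlinarith [norm_nonneg A, norm_nonneg X]

private lemma dlt_iter_norm (A X : H →L[ℂ] H) (n : ℕ) :
    ‖(dlt A)^[n] X‖ ≤ (2 * ‖A‖)^n * ‖X‖ := by
  induction n generalizing X with
  | zero => simp
  | succ n ih =>
    rw [Function.iterate_succ_apply]
    calc ‖(dlt A)^[n] (dlt A X)‖ ≤ (2 * ‖A‖)^n * ‖dlt A X‖ := ih _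
      _ ≤ (2 * ‖A‖)^n * (2 * ‖A‖ * ‖X‖) := by
          have : (0:ℝ) ≤ (2 * ‖A‖)^n := by positivity
          exact mul_le_mul_of_nonneg_left (dlt_norm A X) this
      _ = (2 * ‖A‖)^(n+1) * ‖X‖ := by ring

omit [CompleteSpace H] in
private lemma dlt_add (A X Y : H →L[ℂ] H) : dlt A (X + Y) = dlt A X + dlt A Y := by
  simp only [dlt]; noncomm_ring

omit [CompleteSpace H] in
private lemma dlt_smul (A : H →L[ℂ] H) (c : ℂ) (X : H →L[ℂ] H) :
    dlt A (c • X) = c • dlt A X := by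
  simp only [dlt, mul_smul_comm, smul_mul_assoc, smul_sub]

omit [CompleteSpace H] in
private lemma dlt_mul (A X Y : H →L[ℂ] H) :
    dlt A (X * Y) = dlt A X * Y + X * dlt A Y := by
  simp only [dlt]; noncomm_ring

/-- Kleinecke–Shirokov–type lemma : a self-adjoint commutator commuting with one of its
factors vanishes. -/
theorem comm_eq_of_comm_commutator [Nontrivial H] {A B : H →L[ℂ] H} (hA : IsSelfAdjoint A)
    (hB : IsSelfAdjoint B) (hc : A * (A * B - B * A) = (A * B - B * A) * A) :
    A * B = B * A := by
  set D : H →L[ℂ] H := A * B - B * A with hD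
  have hdD : dlt A D = 0 := by show A * D - D * A = 0; rw [hc, sub_self]
  have hdB : dlt A B = D := rfl
  -- Leibniz-type rule
  have l3 : ∀ (n : ℕ) (y : H →L[ℂ] H),
      (dlt A)^[n+1] (B * y) = B * (dlt A)^[n+1] y + ((n:ℂ)+1) • (D * (dlt A)^[n] y) := by
    intro n
    induction n with
    | zero =>
      intro y
      simp [dlt_mul, hdB, add_comm]
    | succ n ih =>
      intro y
      rw [Function.iterate_succ_apply' (dlt A) (n+1) (B*y), ih y, dlt_add, dlt_mul, dlt_smul,
        dlt_mul, hdD, hdB, ← Function.iterate_succ_apply' (dlt A) (n+1) y,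
        ← Function.iterate_succ_apply' (dlt A) n y]
      rw [zero_mul, zero_add]
      push_cast
      match_scalars <;> ring
  have l4 : ∀ n : ℕ, (dlt A)^[n+1] (1 : H →L[ℂ] H) = 0 := by
    intro n
    have h1 : dlt A 1 = 0 := by simp [dlt]
    rw [Function.iterate_succ_apply, h1]
    induction n with
    | zero => simp
    | succ n ih => rw [Function.iterate_succ_apply]; simpa [dlt] using ih
  -- vanishing above the diagonal, and the factorial identity on the diagonal
  have l5 : ∀ m : ℕ, (∀ n : ℕ, m < n → (dlt A)^[n] (B^m) = 0) ∧
      (dlt A)^[m] (B^m) = ((m.factorial : ℂ)) • D^m := by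
    intro m
    induction m with
    | zero =>
      refine ⟨fun n hn => ?_, by simp⟩
      obtain ⟨k, rfl⟩ : ∃ k, n = k + 1 := ⟨n - 1, by omega⟩
      simpa using l4 k
    | succ m ih =>
      constructor
      · intro n hn
        obtain ⟨k, rfl⟩ : ∃ k, n = k + 1 := ⟨n - 1, by omega⟩
        rw [pow_succ', l3 k (B^m), ih.1 (k+1) (by omega), ih.1 k (by omega)]
        simp
      · rw [pow_succ', l3 m (B^m), ih.1 (m+1) (by omega), ih.2]
        rw [mul_zero, zero_add, mul_smul_comm, smul_smul, ← pow_succ']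
        congr 1
        rw [Nat.factorial_succ]
        push_cast
        ring
  -- norm bound ‖D^m‖ * m! ≤ (2‖A‖‖B‖)^m
  have l8 : ∀ m : ℕ, (m.factorial : ℝ) * ‖D^m‖ ≤ (2 * ‖A‖ * ‖B‖)^m := by
    intro m
    have h1 : ‖(dlt A)^[m] (B^m)‖ ≤ (2*‖A‖)^m * ‖B^m‖ := dlt_iter_norm A _ m
    have h2 : ‖(dlt A)^[m] (B^m)‖ = (m.factorial : ℝ) * ‖D^m‖ := by
      rw [(l5 m).2, norm_smul]
      simp
    have h3 : ‖B^m‖ ≤ ‖B‖^m := by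
      rcases Nat.eq_zero_or_pos m with hm | hm
      · subst hm; simp
      · exact norm_pow_le' B hm
    calc (m.factorial : ℝ) * ‖D^m‖ = ‖(dlt A)^[m] (B^m)‖ := h2.symm
      _ ≤ (2*‖A‖)^m * ‖B^m‖ := h1
      _ ≤ (2*‖A‖)^m * ‖B‖^m := mul_le_mul_of_nonneg_left h3 (by positivity)
      _ = (2 * ‖A‖ * ‖B‖)^m := by rw [← mul_pow]
  -- D is skew-adjoint; I • D is self-adjoint
  have hskew : star D = -D := by
    simp only [hD, star_sub, star_mul, hA.star_eq, hB.star_eq, neg_sub]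
  have hX : IsSelfAdjoint (Complex.I • D) := by
    rw [IsSelfAdjoint, star_smul, hskew]
    simp [Complex.star_def, Complex.conj_I]
  -- ‖D‖^(2^k) = ‖D^(2^k)‖
  have l10 : ∀ k : ℕ, ‖D‖ ^ (2^k) = ‖D ^ (2^k)‖ := by
    intro k
    have h1 : ‖(Complex.I • D) ^ 2^k‖₊ = ‖Complex.I • D‖₊ ^ 2^k := hX.nnnorm_pow_two_pow k
    have h2 : ∀ n : ℕ, ‖(Complex.I • D)^n‖ = ‖D^n‖ := by
      intro n
      rw [smul_pow, norm_smul]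
      simp
    have h3 : ‖Complex.I • D‖ = ‖D‖ := by rw [norm_smul]; simp
    have h4 := congrArg (fun x : NNReal => (x : ℝ)) h1
    simp only [coe_nnnorm, NNReal.coe_pow] at h4
    rw [h2, h3] at h4
    exact h4.symm
  -- conclude D = 0
  have hDzero : D = 0 := by
    by_contra hne
    have hpos : 0 < ‖D‖ := norm_pos_iff.mpr hne
    set c : ℝ := 2 * ‖A‖ * ‖B‖ with hc'
    have hrtend := FloorSemiring.tendsto_pow_div_factorial_atTop (K := ℝ) (c / ‖D‖)
    have hev : ∀ᶠ n : ℕ in Filter.atTop, (c/‖D‖)^n / (n.factorial : ℝ) < 1 :=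
      hrtend.eventually_lt_const (by norm_num)
    obtain ⟨N, hN⟩ := Filter.eventually_atTop.mp hev
    set n : ℕ := 2 ^ N with hn'
    have hNn : N ≤ n := (Nat.lt_two_pow_self (n := N)).le
    have h1 : (c/‖D‖)^n / (n.factorial : ℝ) < 1 := hN n hNn
    have hfacpos : (0:ℝ) < (n.factorial : ℝ) := by positivity
    have h2 : (c/‖D‖)^n < (n.factorial : ℝ) := by
      rw [div_lt_one hfacpos] at h1; exact h1
    have h3 : c^n < (n.factorial : ℝ) * ‖D‖^n := by
      rw [div_pow] at h2
      have := (div_lt_iff₀ (by positivity : (0:ℝ) < ‖D‖^n)).mp h2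
      linarith [this]
    have h4 : (n.factorial : ℝ) * ‖D‖^n ≤ c^n := by
      have := l8 n
      rw [← l10 N] at this
      exact this
    linarith
  rw [← sub_eq_zero]
  exact hDzero


end KS

section Spec

/-! ### clamp functions -/

def clampFn (r r' : ℝ) : ℝ → ℝ := fun x => max 0 (min 1 ((r' - x) / (r' - r)))

lemma clampFn_cont (r r' : ℝ) : Continuous (clampFn r r') := by
  unfold clampFn
  fun_prop

lemma clampFn_nonneg (r r' x : ℝ) : 0 ≤ clampFn r r' x := le_max_left _ _

lemma clampFn_le_one (r r' x : ℝ) : clampFn r r' x ≤ 1 :=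
  max_le zero_le_one (min_le_left _ _)

lemma clampFn_eq_one {r r' x : ℝ} (h : r < r') (hx : x ≤ r) : clampFn r r' x = 1 := by
  have h1 : (1:ℝ) ≤ (r' - x) / (r' - r) := by
    rw [le_div_iff₀ (by linarith)]
    linarith
  simp [clampFn, min_eq_left h1]

lemma clampFn_eq_zero {r r' x : ℝ} (h : r < r') (hx : r' ≤ x) : clampFn r r' x = 0 := by
  have h1 : (r' - x) / (r' - r) ≤ 0 :=
    div_nonpos_of_nonpos_of_nonneg (by linarith) (by linarith)
  have h2 : min 1 ((r' - x) / (r' - r)) ≤ 0 := le_trans (min_le_right _ _) h1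
  simp [clampFn, max_eq_left h2]

lemma clampFn_ge {r r' s x : ℝ} (h : r < r') (hx : x ≤ s) :
    min 1 ((r' - s) / (r' - r)) ≤ clampFn r r' x := by
  refine le_trans (min_le_min_left 1 ?_) (le_max_right _ _)
  gcongr <;> linarith

lemma clampFn_shift_mono {r s κ : ℝ} (h : r ≤ s) (hκ : 0 < κ) (x : ℝ) :
    clampFn r (r + κ) x ≤ clampFn s (s + κ) x := by
  apply max_le_max le_rfl
  apply min_le_min le_rfl
  have e1 : r + κ - r = κ := by ring
  have e2 : s + κ - s = κ := by ring
  rw [e1, e2]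
  gcongr <;> linarith

lemma clampFn_le_of_sep {r r' s s' : ℝ} (h1 : r < r') (h2 : r' ≤ s) (h3 : s < s') (x : ℝ) :
    clampFn r r' x ≤ clampFn s s' x := by
  rcases le_or_gt x s with hx | hx
  · rw [clampFn_eq_one h3 hx]; exact clampFn_le_one _ _ _
  · rw [clampFn_eq_zero h1 (by linarith)]; exact clampFn_nonneg _ _ _


/-! ### the positive functional coming from cfc -/

lemma expVal_add (A B : H →L[ℂ] H) (ψ : H) :
    expVal (A + B) ψ = expVal A ψ + expVal B ψ := by
  simp [expVal, inner_add_right]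

lemma expVal_sub (A B : H →L[ℂ] H) (ψ : H) :
    expVal (A - B) ψ = expVal A ψ - expVal B ψ := by
  simp [expVal, inner_sub_right]

lemma expVal_neg (A : H →L[ℂ] H) (ψ : H) :
    expVal (-A) ψ = - expVal A ψ := by
  simp [expVal, inner_neg_right]

lemma expVal_smul_real (k : ℝ) (A : H →L[ℂ] H) (ψ : H) :
    expVal ((k : ℂ) • A) ψ = k * expVal A ψ := by
  simp only [expVal, ContinuousLinearMap.smul_apply, inner_smul_right]
  exact Complex.re_ofReal_mul k _

lemma expVal_one (ψ : H) (hψ : ‖ψ‖ = 1) : expVal 1 ψ = 1 := by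
  simp only [expVal, ContinuousLinearMap.one_apply]
  rw [@inner_self_eq_norm_sq_to_K ℂ, hψ]
  norm_num

lemma expVal_sq_nonneg (X : H →L[ℂ] H) (hX : IsSelfAdjoint X) (ψ : H) :
    0 ≤ expVal (X * X) ψ := by
  have h1 : (X * X) ψ = X (X ψ) := rfl
  have h2 : @inner ℂ _ _ ψ (X (X ψ)) = @inner ℂ _ _ (X ψ) (X ψ) := by
    have h3 := ContinuousLinearMap.adjoint_inner_left X (X ψ) ψ
    rw [hX.adjoint_eq] at h3
    exact h3.symm
  rw [expVal, h1, h2]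
  have h4 := @inner_self_nonneg ℂ H _ _ _ (X ψ)
  simpa using h4

variable (T : H →L[ℂ] H) (ψ : H)

/-- The positive functional `b ↦ ⟨(cfc b T) ψ, ψ⟩`. -/
def phi (b : ℝ → ℝ) : ℝ := expVal (cfc b T) ψ

variable {T}

lemma phi_one (hψ : ‖ψ‖ = 1) (hT : IsSelfAdjoint T) : phi T ψ (fun _ => 1) = 1 := by
  rw [phi, cfc_const_one ℝ T hT, expVal_one ψ hψ]

lemma phi_add {f g : ℝ → ℝ} (hf : Continuous f) (hg : Continuous g) (hT : IsSelfAdjoint T) :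
    phi T ψ (fun x => f x + g x) = phi T ψ f + phi T ψ g := by
  rw [phi, cfc_add T f g hf.continuousOn hg.continuousOn, expVal_add]; rfl

lemma phi_sub {f g : ℝ → ℝ} (hf : Continuous f) (hg : Continuous g) (hT : IsSelfAdjoint T) :
    phi T ψ (fun x => f x - g x) = phi T ψ f - phi T ψ g := by
  rw [phi, cfc_sub f g T hf.continuousOn hg.continuousOn, expVal_sub]; rfl

lemma phi_neg {f : ℝ → ℝ} (hT : IsSelfAdjoint T) :
    phi T ψ (fun x => - f x) = - phi T ψ f := by
  rw [phi, cfc_neg f T, expVal_neg]; rfl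

lemma phi_const_mul (k : ℝ) {f : ℝ → ℝ} (hf : Continuous f) (hT : IsSelfAdjoint T) :
    phi T ψ (fun x => k * f x) = k * phi T ψ f := by
  have h1 : cfc (fun x => k * f x) T = (algebraMap ℝ (H →L[ℂ] H) k) * cfc f T := by
    rw [← cfc_const k T hT, ← cfc_mul _ _ T continuousOn_const hf.continuousOn]
  rw [phi, h1, Algebra.algebraMap_eq_smul_one]
  have h2 : (k • (1 : H →L[ℂ] H)) * cfc f T = (k : ℂ) • cfc f T := by
    rw [smul_mul_assoc, one_mul]
    norm_num [Complex.coe_smul]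
  rw [h2, expVal_smul_real]
  rfl

lemma phi_congr {f g : ℝ → ℝ} (h : Set.EqOn f g (spectrum ℝ T)) :
    phi T ψ f = phi T ψ g := by
  rw [phi, cfc_congr h]; rfl

lemma phi_nonneg {f : ℝ → ℝ} (hf : Continuous f)
    (h : ∀ x ∈ spectrum ℝ T, 0 ≤ f x) (hT : IsSelfAdjoint T) : 0 ≤ phi T ψ f := by
  set s : ℝ → ℝ := fun x => Real.sqrt (f x) with hs
  have hscont : Continuous s := Real.continuous_sqrt.comp hf
  have h1 : Set.EqOn f (fun x => s x * s x) (spectrum ℝ T) := by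
    intro x hx
    simp only [hs]
    rw [Real.mul_self_sqrt (h x hx)]
  rw [phi_congr ψ h1, phi,
    cfc_mul _ _ T hscont.continuousOn hscont.continuousOn]
  exact expVal_sq_nonneg _ (cfc_predicate s T) ψ

lemma phi_mono {f g : ℝ → ℝ} (hf : Continuous f) (hg : Continuous g)
    (h : ∀ x ∈ spectrum ℝ T, f x ≤ g x) (hT : IsSelfAdjoint T) : phi T ψ f ≤ phi T ψ g := by
  have h1 : 0 ≤ phi T ψ (fun x => g x - f x) :=
    phi_nonneg ψ (hg.sub hf) (fun x hx => by linarith [h x hx]) hT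
  rw [phi_sub ψ hg hf hT] at h1
  linarith

lemma phi_le_one {f : ℝ → ℝ} (hf : Continuous f) (h : ∀ x ∈ spectrum ℝ T, f x ≤ 1)
    (hψ : ‖ψ‖ = 1) (hT : IsSelfAdjoint T) : phi T ψ f ≤ 1 := by
  rw [← phi_one ψ hψ hT]
  exact phi_mono ψ hf continuous_const h hT


/-! ### the distribution function -/

lemma clampFn_right_mono {r a b : ℝ} (h1 : r < a) (h2 : a ≤ b) (x : ℝ) :
    clampFn r a x ≤ clampFn r b x := by
  rcases le_or_gt x r with hx | hx
  · rw [clampFn_eq_one h1 hx, clampFn_eq_one (lt_of_lt_of_le h1 h2) hx]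
  · apply max_le_max le_rfl
    apply min_le_min le_rfl
    rw [div_le_div_iff₀ (by linarith) (by linarith)]
    nlinarith

lemma exists_nat_inv_le {a : ℝ} (ha : 0 < a) : ∃ n : ℕ, ((n:ℝ)+1)⁻¹ ≤ a := by
  obtain ⟨n, hn⟩ := exists_nat_gt (1/a)
  refine ⟨n, ?_⟩
  rw [inv_le_comm₀ (by positivity) ha, ← one_div]
  linarith

variable [Nontrivial H]

lemma spec_subset (T : H →L[ℂ] H) : spectrum ℝ T ⊆ Set.Icc (-‖T‖) ‖T‖ := by
  intro x hx
  have h := spectrum.norm_le_norm_of_mem hx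
  rw [Real.norm_eq_abs] at h
  exact Set.mem_Icc.mpr (abs_le.mp h)

variable (T : H →L[ℂ] H) (ψ : H)

/-- distribution function of the spectral measure -/
def Fraw : ℝ → ℝ := fun r => ⨅ n : ℕ, phi T ψ (clampFn r (r + ((n:ℝ)+1)⁻¹))

variable {T ψ}
variable (hT : IsSelfAdjoint T) (hψ : ‖ψ‖ = 1)
include hT hψ

lemma phi_clamp_nonneg {r r' : ℝ} : 0 ≤ phi T ψ (clampFn r r') :=
  phi_nonneg ψ (clampFn_cont r r') (fun x _ => clampFn_nonneg r r' x) hT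

lemma phi_clamp_le_one {r r' : ℝ} : phi T ψ (clampFn r r') ≤ 1 :=
  phi_le_one ψ (clampFn_cont r r') (fun x _ => clampFn_le_one r r' x) hψ hT

lemma Fraw_bddBelow (r : ℝ) :
    BddBelow (Set.range fun n : ℕ => phi T ψ (clampFn r (r + ((n:ℝ)+1)⁻¹))) := by
  refine ⟨0, fun y hy => ?_⟩
  obtain ⟨n, rfl⟩ := hy
  exact phi_clamp_nonneg hT hψ

lemma Fraw_nonneg (r : ℝ) : 0 ≤ Fraw T ψ r :=
  le_ciInf fun n => phi_clamp_nonneg hT hψ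

lemma Fraw_le_one (r : ℝ) : Fraw T ψ r ≤ 1 :=
  (ciInf_le (Fraw_bddBelow hT hψ r) 0).trans (phi_clamp_le_one hT hψ)

lemma Fraw_mono : Monotone (Fraw T ψ) := by
  intro r s hrs
  apply ciInf_mono (Fraw_bddBelow hT hψ r)
  intro n
  exact phi_mono ψ (clampFn_cont _ _) (clampFn_cont _ _)
    (fun x _ => clampFn_shift_mono hrs (by positivity) x) hT

lemma Fraw_le_phi {r r' : ℝ} (h : r < r') : Fraw T ψ r ≤ phi T ψ (clampFn r r') := by
  obtain ⟨n, hn⟩ := exists_nat_inv_le (by linarith : (0:ℝ) < r' - r)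
  refine (ciInf_le (Fraw_bddBelow hT hψ r) n).trans ?_
  exact phi_mono ψ (clampFn_cont _ _) (clampFn_cont _ _)
    (fun x _ => clampFn_right_mono (lt_add_of_pos_right r (by positivity)) (by linarith) x) hT

lemma phi_le_Fraw {r r' s : ℝ} (h1 : r < r') (h2 : r' ≤ s) :
    phi T ψ (clampFn r r') ≤ Fraw T ψ s := by
  refine le_ciInf fun n => ?_
  exact phi_mono ψ (clampFn_cont _ _) (clampFn_cont _ _)
    (fun x _ => clampFn_le_of_sep h1 h2 (lt_add_of_pos_right s (by positivity)) x) hT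

lemma Fraw_eq_one {r : ℝ} (h : ‖T‖ ≤ r) : Fraw T ψ r = 1 := by
  have h1 : ∀ n : ℕ, phi T ψ (clampFn r (r + ((n:ℝ)+1)⁻¹)) = 1 := by
    intro n
    rw [phi_congr ψ (g := fun _ => 1) fun x hx => ?_, phi_one ψ hψ hT]
    have hx' := spec_subset T hx
    exact clampFn_eq_one (lt_add_of_pos_right r (by positivity)) (le_trans hx'.2 h)
  simp only [Fraw, h1]
  exact ciInf_const

lemma phi_zero : phi T ψ (fun _ => (0:ℝ)) = 0 := by
  have h : cfc (fun _ : ℝ => (0:ℝ)) T = 0 := by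
    rw [cfc_const (0:ℝ) T hT, map_zero]
  rw [phi, h]
  simp [expVal]

lemma Fraw_eq_zero {r : ℝ} (h : r < -‖T‖) : Fraw T ψ r = 0 := by
  refine le_antisymm ?_ (Fraw_nonneg hT hψ r)
  obtain ⟨n, hn⟩ := exists_nat_inv_le (by linarith : (0:ℝ) < -‖T‖ - r)
  refine (ciInf_le (Fraw_bddBelow hT hψ r) n).trans ?_
  rw [phi_congr ψ (g := fun _ => (0:ℝ)) fun x hx => ?_, phi_zero hT hψ]
  have hx' := spec_subset T hx
  exact clampFn_eq_zero (lt_add_of_pos_right r (by positivity)) (by linarith [hx'.1])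

lemma Fraw_rc (r : ℝ) {ε : ℝ} (hε : 0 < ε) : ∃ s, r < s ∧ Fraw T ψ s ≤ Fraw T ψ r + ε := by
  have h0 : Fraw T ψ r < Fraw T ψ r + ε/2 := by linarith
  obtain ⟨n, hn⟩ := exists_lt_of_ciInf_lt h0
  have hεnpos : (0:ℝ) < ((n:ℝ)+1)⁻¹ := by positivity
  have hδpos : (0:ℝ) < min (1/2) (ε/8) := by positivity
  have hδhalf : min (1/2) (ε/8) ≤ 1/2 := min_le_left _ _
  have hδε : min (1/2) (ε/8) ≤ ε/8 := min_le_right _ _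
  have h1δ : (0:ℝ) < 1 - min (1/2) (ε/8) := by linarith
  obtain ⟨m, hm⟩ := exists_nat_inv_le (by positivity : (0:ℝ) < min (1/2) (ε/8) * ((n:ℝ)+1)⁻¹ / 4)
  have hεmpos : (0:ℝ) < ((m:ℝ)+1)⁻¹ := by positivity
  refine ⟨r + min (1/2) (ε/8) * ((n:ℝ)+1)⁻¹ / 4, by nlinarith, ?_⟩
  set δ : ℝ := min (1/2) (ε/8)
  set en : ℝ := ((n:ℝ)+1)⁻¹
  set em : ℝ := ((m:ℝ)+1)⁻¹
  -- pointwise comparison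
  have hpt : ∀ x, clampFn (r + δ * en / 4) (r + δ * en / 4 + em) x
      ≤ (1-δ)⁻¹ * clampFn r (r + en) x := by
    intro x
    rcases le_or_gt (r + δ * en / 4 + em) x with hx | hx
    · rw [clampFn_eq_zero (by linarith) hx]
      have := clampFn_nonneg r (r + en) x
      positivity
    · have hge := clampFn_ge (r := r) (r' := r + en) (s := r + δ * en / 4 + em) (x := x)
        (by linarith) (by linarith)
      have harith : 1 - δ ≤ min 1 ((r + en - (r + δ * en / 4 + em)) / (r + en - r)) := by
        have he : r + en - r = en := by ring
        rw [he]
        refine le_min (by linarith) ?_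
        rw [le_div_iff₀ hεnpos]
        nlinarith
      have h2 : 1 - δ ≤ clampFn r (r + en) x := le_trans harith hge
      calc clampFn (r + δ * en / 4) (r + δ * en / 4 + em) x ≤ 1 := clampFn_le_one _ _ _
        _ = (1-δ)⁻¹ * (1-δ) := by field_simp
        _ ≤ (1-δ)⁻¹ * clampFn r (r + en) x :=
            mul_le_mul_of_nonneg_left h2 (by positivity)
  have step1 : Fraw T ψ (r + δ * en / 4) ≤ phi T ψ (clampFn (r + δ * en / 4) (r + δ * en / 4 + em)) :=
    ciInf_le (Fraw_bddBelow hT hψ _) m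
  have step2 : phi T ψ (clampFn (r + δ * en / 4) (r + δ * en / 4 + em))
      ≤ (1-δ)⁻¹ * phi T ψ (clampFn r (r + en)) := by
    have hc : Continuous (fun x => (1-δ)⁻¹ * clampFn r (r + en) x) :=
      continuous_const.mul (clampFn_cont _ _)
    have := phi_mono ψ (clampFn_cont _ _) hc (fun x _ => hpt x) hT
    rwa [phi_const_mul ψ _ (clampFn_cont _ _) hT] at this
  have hXle : phi T ψ (clampFn r (r + en)) ≤ 1 := phi_clamp_le_one hT hψ
  have hXge : 0 ≤ phi T ψ (clampFn r (r + en)) := phi_clamp_nonneg hT hψ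
  have step3 : (1-δ)⁻¹ * phi T ψ (clampFn r (r + en)) ≤ phi T ψ (clampFn r (r + en)) + ε/2 := by
    rw [inv_mul_le_iff₀ h1δ]
    nlinarith
  linarith [step1, step2, step3, hn]


/-! ### the spectral measure as a Stieltjes measure -/

variable (T ψ) in
def specF [Nontrivial H] (hT : IsSelfAdjoint T) (hψ : ‖ψ‖ = 1) : StieltjesFunction ℝ where
  toFun := Fraw T ψ
  mono' := Fraw_mono hT hψ
  right_continuous' := by
    intro x
    rw [ContinuousWithinAt]
    apply tendsto_order.2
    constructor
    · intro a ha
      filter_upwards [self_mem_nhdsWithin] with y hy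
      exact lt_of_lt_of_le ha (Fraw_mono hT hψ hy)
    · intro a ha
      obtain ⟨s, hs1, hs2⟩ := Fraw_rc hT hψ x (by linarith : (0:ℝ) < (a - Fraw T ψ x)/2)
      have hIic : Set.Iic s ∈ nhdsWithin x (Set.Ici x) :=
        mem_nhdsWithin_of_mem_nhds (Iic_mem_nhds hs1)
      filter_upwards [hIic] with y hy
      have := Fraw_mono hT hψ hy
      linarith

lemma specF_tendsto_atBot : Filter.Tendsto (Fraw T ψ) Filter.atBot (nhds 0) := by
  have h : ∀ᶠ r in Filter.atBot, Fraw T ψ r = 0 := by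
    filter_upwards [Filter.Iic_mem_atBot (-‖T‖ - 1)] with r hr
    exact Fraw_eq_zero hT hψ (by simp at hr; linarith)
  exact Filter.Tendsto.congr' (h.mono fun r hr => hr.symm) tendsto_const_nhds

lemma specF_tendsto_atTop : Filter.Tendsto (Fraw T ψ) Filter.atTop (nhds 1) := by
  have h : ∀ᶠ r in Filter.atTop, Fraw T ψ r = 1 := by
    filter_upwards [Filter.Ici_mem_atTop ‖T‖] with r hr
    exact Fraw_eq_one hT hψ hr
  exact Filter.Tendsto.congr' (h.mono fun r hr => hr.symm) tendsto_const_nhds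

lemma specMeasure_univ : (specF T ψ hT hψ).measure Set.univ = 1 := by
  rw [StieltjesFunction.measure_univ _ (specF_tendsto_atBot hT hψ) (specF_tendsto_atTop hT hψ)]
  norm_num

lemma specMeasure_Iic (x : ℝ) :
    (specF T ψ hT hψ).measure (Set.Iic x) = ENNReal.ofReal (Fraw T ψ x) := by
  rw [StieltjesFunction.measure_Iic _ (specF_tendsto_atBot hT hψ)]
  norm_num
  rfl

lemma specMeasure_Ioc (a b : ℝ) :
    (specF T ψ hT hψ).measure (Set.Ioc a b) = ENNReal.ofReal (Fraw T ψ b - Fraw T ψ a) :=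
  StieltjesFunction.measure_Ioc _ a b

lemma specMeasure_compl_Icc :
    (specF T ψ hT hψ).measure (Set.Icc (-‖T‖) ‖T‖)ᶜ = 0 := by
  refine measure_mono_null (t := Set.Iio (-‖T‖) ∪ Set.Ioi ‖T‖) (fun x hx => ?_)
    (measure_union_null ?_ ?_)
  · simp only [Set.mem_compl_iff, Set.mem_Icc, not_and, not_le] at hx
    rcases lt_or_ge x (-‖T‖) with h | h
    · exact Or.inl h
    · exact Or.inr (hx h)
  · -- Iio (-‖T‖)
    refine measure_mono_null (t := ⋃ n : ℕ, Set.Iic (-‖T‖ - ((n:ℝ)+1)⁻¹)) ?_ ?_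
    · intro y hy
      simp only [Set.mem_Iio] at hy
      obtain ⟨n, hn⟩ := exists_nat_inv_le (by linarith : (0:ℝ) < -‖T‖ - y)
      exact Set.mem_iUnion.mpr ⟨n, by simp only [Set.mem_Iic]; linarith⟩
    · refine measure_iUnion_null fun n => ?_
      have hlt : -‖T‖ - ((n:ℝ)+1)⁻¹ < -‖T‖ := by
        have : (0:ℝ) < ((n:ℝ)+1)⁻¹ := by positivity
        linarith
      rw [specMeasure_Iic hT hψ, Fraw_eq_zero hT hψ hlt]
      simp
  · -- Ioi ‖T‖
    refine measure_mono_null (t := ⋃ n : ℕ, Set.Ioc ‖T‖ (‖T‖ + (n:ℝ) + 1)) ?_ ?_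
    · intro y hy
      simp only [Set.mem_Ioi] at hy
      obtain ⟨n, hn⟩ := exists_nat_gt (y - ‖T‖)
      exact Set.mem_iUnion.mpr ⟨n, by simp only [Set.mem_Ioc]; constructor <;> [exact hy; linarith]⟩
    · refine measure_iUnion_null fun n => ?_
      rw [specMeasure_Ioc hT hψ, Fraw_eq_one hT hψ le_rfl, Fraw_eq_one hT hψ (by linarith [Nat.cast_nonneg (α := ℝ) n])]
      simp


/-! ### representation: the Stieltjes measure represents the cfc functional -/

lemma phi_const (k : ℝ) : phi T ψ (fun _ => k) = k := by
  rw [phi, cfc_const k T hT, Algebra.algebraMap_eq_smul_one]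
  have h1 : (k • (1 : H →L[ℂ] H)) = (k : ℂ) • 1 := by
    norm_num [Complex.coe_smul]
  rw [h1, expVal_smul_real, expVal_one ψ hψ]
  ring

lemma phi_finset_sum {ι : Type*} (s : Finset ι) (f : ι → ℝ → ℝ)
    (hf : ∀ i ∈ s, Continuous (f i)) :
    phi T ψ (fun x => ∑ i ∈ s, f i x) = ∑ i ∈ s, phi T ψ (f i) := by
  induction s using Finset.cons_induction with
  | empty => simpa using phi_zero hT hψ
  | cons a s ha ih =>
    have hfa : Continuous (f a) := hf a (Finset.mem_cons_self a s)
    have hfs : ∀ i ∈ s, Continuous (f i) := fun i hi => hf i (Finset.mem_cons_of_mem hi)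
    have hsum : Continuous (fun x => ∑ i ∈ s, f i x) := continuous_finset_sum s hfs
    simp only [Finset.sum_cons]
    rw [phi_add ψ hfa hsum hT, ih hfs]

set_option maxHeartbeats 2000000 in
lemma phi_le_integral (b : ℝ → ℝ) (hb : Continuous b) :
    phi T ψ b ≤ ∫ x, b x ∂(specF T ψ hT hψ).measure := by
  set ν := (specF T ψ hT hψ).measure with hνdef
  haveI hprob : IsProbabilityMeasure ν := ⟨specMeasure_univ hT hψ⟩
  have hM0 : 0 ≤ ‖T‖ := norm_nonneg T
  set M : ℝ := ‖T‖ with hM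
  set c : ℝ := M + 1 with hc
  have hc0 : 0 < c := by linarith
  -- null complement
  have hIocnull : ν (Set.Ioc (-c) c)ᶜ = 0 := by
    refine measure_mono_null (Set.compl_subset_compl.mpr ?_) (specMeasure_compl_Icc hT hψ)
    intro x hx
    simp only [Set.mem_Icc] at hx
    exact ⟨by linarith [hx.1], by linarith [hx.2]⟩
  have hae : ∀ᵐ x ∂ν, x ∈ Set.Ioc (-c) c := by
    rw [MeasureTheory.ae_iff]
    simpa [Set.compl_def] using hIocnull
  have hrestrict : ν.restrict (Set.Ioc (-c) c) = ν :=
    Measure.restrict_eq_self_of_ae_mem hae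
  -- integrability
  have hIntOn : ∀ (g : ℝ → ℝ), Continuous g → ∀ a a' : ℝ, IntegrableOn g (Set.Ioc a a') ν :=
    fun g hg a a' => (ContinuousOn.integrableOn_compact isCompact_Icc hg.continuousOn).mono_set
      Set.Ioc_subset_Icc_self
  have hIntb : Integrable b ν := by
    rw [← hrestrict]
    exact hIntOn b hb (-c) c
  refine le_of_forall_pos_le_add fun ε hε => ?_
  -- bound K on a big interval
  obtain ⟨K0, hK0⟩ := (isCompact_Icc (a := -c-1) (b := c+1)).exists_bound_of_continuousOn
    hb.continuousOn
  set K : ℝ := max K0 0 with hK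
  have hK0' : ∀ x ∈ Set.Icc (-c-1) (c+1), |b x| ≤ K := fun x hx =>
    le_trans (by simpa [Real.norm_eq_abs] using hK0 x hx) (le_max_left _ _)
  have hKnn : 0 ≤ K := le_max_right _ _
  have hIntbK : Integrable (fun x => b x + K) ν := hIntb.add (integrable_const K)
  set ε₁ : ℝ := ε/4 with hε₁
  have hε₁pos : 0 < ε₁ := by positivity
  -- uniform continuity
  obtain ⟨δ, hδpos, hδ⟩ := (Metric.uniformContinuousOn_iff_le.mp
    ((isCompact_Icc (a := -c-1) (b := c+1)).uniformContinuousOn_of_continuous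
      hb.continuousOn)) ε₁ hε₁pos
  -- partition size
  obtain ⟨n0, hn0⟩ := exists_nat_gt ((2*c)/(min (δ/2) 1))
  set m : ℕ := n0 + 1 with hm
  have hmpos : (0:ℝ) < (m:ℝ) := by positivity
  set Δ : ℝ := 2*c/m with hΔ
  have hΔpos : 0 < Δ := by positivity
  have hminpos : 0 < min (δ/2) 1 := by positivity
  have hΔle : Δ ≤ min (δ/2) 1 := by
    have hmgt : (2*c)/(min (δ/2) 1) < (m:ℝ) :=
      lt_of_lt_of_le hn0 (by exact_mod_cast Nat.le_succ n0)
    rw [div_lt_iff₀ hminpos] at hmgt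
    rw [hΔ, div_le_iff₀ hmpos]
    nlinarith [hmgt]
  have hΔδ : Δ ≤ δ/2 := le_trans hΔle (min_le_left _ _)
  have hΔ1 : Δ ≤ 1 := le_trans hΔle (min_le_right _ _)
  set t : ℕ → ℝ := fun i => -c + i * Δ with ht
  have ht0 : t 0 = -c := by simp [ht]
  have hmne : (m:ℝ) ≠ 0 := ne_of_gt hmpos
  have htm : t m = c := by
    have h2 : (m:ℝ) * (2*c/(m:ℝ)) = 2*c := by field_simp
    simp only [ht, hΔ]
    rw [h2]
    ring
  have htmono : Monotone t := by
    intro i j hij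
    simp only [ht]
    have hcast : (i:ℝ) ≤ j := by exact_mod_cast hij
    nlinarith [hΔpos]
  have htsucc : ∀ i : ℕ, t (i+1) - t i = Δ := by
    intro i
    simp only [ht]
    push_cast
    ring
  have htmem : ∀ i : ℕ, i ≤ m → t i ∈ Set.Icc (-c) c := by
    intro i hi
    constructor
    · simp only [ht]
      nlinarith [hΔpos, Nat.cast_nonneg (α := ℝ) i]
    · have h := htmono hi
      rwa [htm] at h
  -- right-continuity choices
  set ε₂ : ℝ := ε / (4 * (2*K + ε₁) + 4) with hε₂
  have hε₂pos : 0 < ε₂ := by positivity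
  have hrc : ∀ i : ℕ, ∃ s, t i < s ∧ Fraw T ψ s ≤ Fraw T ψ (t i) + ε₂/(m+1) :=
    fun i => Fraw_rc hT hψ (t i) (by positivity)
  choose sfun hs1 hs2 using hrc
  have hNe : (Finset.range (m+1)).Nonempty := ⟨0, by simp⟩
  set κ : ℝ := min (δ/2) (min 1 ((Finset.range (m+1)).inf' hNe fun i => sfun i - t i)) with hκ
  have hκpos : 0 < κ := by
    refine lt_min (by positivity) (lt_min one_pos ?_)
    rw [Finset.lt_inf'_iff]
    intro i _
    linarith [hs1 i]
  have hκδ : κ ≤ δ/2 := min_le_left _ _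
  have hκ1 : κ ≤ 1 := le_trans (min_le_right _ _) (min_le_left _ _)
  have hκle : ∀ i : ℕ, i ≤ m → κ ≤ sfun i - t i := by
    intro i hi
    refine le_trans (le_trans (min_le_right _ _) (min_le_right _ _)) ?_
    exact Finset.inf'_le _ (Finset.mem_range.mpr (by omega))
  have hFκ : ∀ i : ℕ, i ≤ m → Fraw T ψ (t i + κ) ≤ Fraw T ψ (t i) + ε₂/(m+1) := by
    intro i hi
    exact le_trans (Fraw_mono hT hψ (by linarith [hκle i hi])) (hs2 i)
  -- the G values
  set G : ℕ → ℝ := fun i => phi T ψ (clampFn (t i) (t i + κ)) with hG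
  have hGF1 : ∀ i : ℕ, Fraw T ψ (t i) ≤ G i := fun i =>
    Fraw_le_phi hT hψ (lt_add_of_pos_right _ hκpos)
  have hGF2 : ∀ i : ℕ, G i ≤ Fraw T ψ (t i + κ) := fun i =>
    phi_le_Fraw hT hψ (lt_add_of_pos_right _ hκpos) le_rfl
  -- the coefficients
  set β : ℕ → ℝ := fun i => b (t (i+1)) + K + ε₁ with hβ
  have hβmem : ∀ i : ℕ, i < m → t (i+1) ∈ Set.Icc (-c-1) (c+1) := by
    intro i hi
    have h := htmem (i+1) (by omega)
    exact ⟨by linarith [h.1], by linarith [h.2]⟩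
  have hβnn : ∀ i : ℕ, i < m → 0 ≤ β i := by
    intro i hi
    have h1 := abs_le.mp (hK0' _ (hβmem i hi))
    simp only [hβ]
    linarith [h1.1]
  have hβub : ∀ i : ℕ, i < m → β i ≤ 2*K + ε₁ := by
    intro i hi
    have h1 := abs_le.mp (hK0' _ (hβmem i hi))
    simp only [hβ]
    linarith [h1.2]
  have hspec : spectrum ℝ T ⊆ Set.Icc (-M) M := spec_subset T
  -- STEP 1 : pointwise bound on the spectrum
  have hpt : ∀ x ∈ spectrum ℝ T,
      b x + K ≤ ∑ i ∈ Finset.range m,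
        β i * (clampFn (t (i+1)) (t (i+1) + κ) x - clampFn (t i) (t i + κ) x) := by
    intro x hx
    obtain ⟨hx1, hx2⟩ := hspec hx
    have hdiff_nn : ∀ i : ℕ, 0 ≤ clampFn (t (i+1)) (t (i+1)+κ) x - clampFn (t i) (t i + κ) x :=
      fun i => sub_nonneg.mpr (clampFn_shift_mono (htmono (Nat.le_succ i)) hκpos x)
    have htele : ∑ i ∈ Finset.range m,
        (clampFn (t (i+1)) (t (i+1) + κ) x - clampFn (t i) (t i + κ) x) = 1 := by
      rw [Finset.sum_range_sub (f := fun i => clampFn (t i) (t i + κ) x)]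
      rw [clampFn_eq_one (lt_add_of_pos_right _ hκpos) (by rw [htm]; linarith),
        clampFn_eq_zero (lt_add_of_pos_right _ hκpos) (by rw [ht0]; linarith), sub_zero]
    calc b x + K = (b x + K) * ∑ i ∈ Finset.range m,
          (clampFn (t (i+1)) (t (i+1) + κ) x - clampFn (t i) (t i + κ) x) := by
            rw [htele, mul_one]
      _ = ∑ i ∈ Finset.range m, (b x + K) *
          (clampFn (t (i+1)) (t (i+1) + κ) x - clampFn (t i) (t i + κ) x) :=
            Finset.mul_sum _ _ _
      _ ≤ ∑ i ∈ Finset.range m, β i *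
          (clampFn (t (i+1)) (t (i+1) + κ) x - clampFn (t i) (t i + κ) x) := by
          refine Finset.sum_le_sum fun i hi => ?_
          rw [Finset.mem_range] at hi
          rcases eq_or_lt_of_le (hdiff_nn i) with heq | hlt
          · rw [← heq, mul_zero, mul_zero]
          · have hxgt : t i < x := by
              by_contra hle
              push_neg at hle
              rw [clampFn_eq_one (lt_add_of_pos_right _ hκpos) hle,
                clampFn_eq_one (lt_add_of_pos_right _ hκpos)
                  (le_trans hle (htmono (Nat.le_succ i)))] at hlt
              simp at hlt
            have hxlt : x < t (i+1) + κ := by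
              by_contra hge
              push_neg at hge
              have hsucc := htsucc i
              rw [clampFn_eq_zero (lt_add_of_pos_right _ hκpos) hge,
                clampFn_eq_zero (lt_add_of_pos_right _ hκpos)
                  (by linarith : t i + κ ≤ x)] at hlt
              simp at hlt
            have hsucc := htsucc i
            have hdist : dist x (t (i+1)) ≤ δ := by
              rw [Real.dist_eq, abs_le]
              constructor <;> linarith
            have hxmem : x ∈ Set.Icc (-c-1) (c+1) := ⟨by linarith, by linarith⟩
            have hbb := hδ x hxmem (t (i+1)) (hβmem i hi) hdist
            rw [Real.dist_eq, abs_le] at hbb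
            have hcoef : b x + K ≤ β i := by
              simp only [hβ]
              linarith [hbb.1]
            exact mul_le_mul_of_nonneg_right hcoef (hdiff_nn i)
  -- STEP 1 at the functional level
  have hWcont : Continuous (fun x => ∑ i ∈ Finset.range m, β i *
      (clampFn (t (i+1)) (t (i+1) + κ) x - clampFn (t i) (t i + κ) x)) :=
    continuous_finset_sum _ fun i _ =>
      continuous_const.mul ((clampFn_cont _ _).sub (clampFn_cont _ _))
  have hstep1 : phi T ψ b + K ≤ ∑ i ∈ Finset.range m, β i * (G (i+1) - G i) := by
    have h1 : phi T ψ (fun x => b x + K) ≤ phi T ψ (fun x => ∑ i ∈ Finset.range m, β i *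
        (clampFn (t (i+1)) (t (i+1) + κ) x - clampFn (t i) (t i + κ) x)) :=
      phi_mono ψ (hb.add continuous_const) hWcont hpt hT
    have h2 : phi T ψ (fun x => b x + K) = phi T ψ b + K := by
      rw [phi_add ψ hb continuous_const hT, phi_const hT hψ K]
    have h3 : phi T ψ (fun x => ∑ i ∈ Finset.range m, β i *
        (clampFn (t (i+1)) (t (i+1) + κ) x - clampFn (t i) (t i + κ) x))
        = ∑ i ∈ Finset.range m, β i * (G (i+1) - G i) := by
      rw [phi_finset_sum hT hψ _ (fun i x => β i *
        (clampFn (t (i+1)) (t (i+1) + κ) x - clampFn (t i) (t i + κ) x)) (fun i _ =>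
        continuous_const.mul ((clampFn_cont _ _).sub (clampFn_cont _ _)))]
      refine Finset.sum_congr rfl fun i _ => ?_
      rw [phi_const_mul ψ (β i) (f := fun x => clampFn (t (i+1)) (t (i+1) + κ) x - clampFn (t i) (t i + κ) x) ((clampFn_cont _ _).sub (clampFn_cont _ _)) hT]
      congr 1
      exact phi_sub ψ (clampFn_cont _ _) (clampFn_cont _ _) hT
    rw [h2] at h1
    rw [h3] at h1
    exact h1
  -- STEP 2
  have hstep2 : ∑ i ∈ Finset.range m, β i * (G (i+1) - G i)
      ≤ ∑ i ∈ Finset.range m, β i * (Fraw T ψ (t (i+1)) - Fraw T ψ (t i))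
        + (2*K + ε₁) * ε₂ := by
    have hterm : ∀ i ∈ Finset.range m, β i * (G (i+1) - G i)
        ≤ β i * (Fraw T ψ (t (i+1)) - Fraw T ψ (t i))
          + (2*K + ε₁) * (Fraw T ψ (t (i+1) + κ) - Fraw T ψ (t (i+1))) := by
      intro i hi
      rw [Finset.mem_range] at hi
      have h1 : G (i+1) - G i ≤ (Fraw T ψ (t (i+1)) - Fraw T ψ (t i))
          + (Fraw T ψ (t (i+1) + κ) - Fraw T ψ (t (i+1))) := by
        linarith [hGF2 (i+1), hGF1 i]
      have hρnn : 0 ≤ Fraw T ψ (t (i+1) + κ) - Fraw T ψ (t (i+1)) :=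
        sub_nonneg.mpr (Fraw_mono hT hψ (by linarith))
      have h3 : β i * (Fraw T ψ (t (i+1) + κ) - Fraw T ψ (t (i+1)))
          ≤ (2*K + ε₁) * (Fraw T ψ (t (i+1) + κ) - Fraw T ψ (t (i+1))) :=
        mul_le_mul_of_nonneg_right (hβub i hi) hρnn
      calc β i * (G (i+1) - G i)
          ≤ β i * ((Fraw T ψ (t (i+1)) - Fraw T ψ (t i))
            + (Fraw T ψ (t (i+1) + κ) - Fraw T ψ (t (i+1)))) :=
            mul_le_mul_of_nonneg_left h1 (hβnn i hi)
        _ = β i * (Fraw T ψ (t (i+1)) - Fraw T ψ (t i))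
            + β i * (Fraw T ψ (t (i+1) + κ) - Fraw T ψ (t (i+1))) := by ring
        _ ≤ _ := by linarith [h3]
    refine le_trans (Finset.sum_le_sum hterm) ?_
    rw [Finset.sum_add_distrib]
    refine add_le_add le_rfl ?_
    rw [← Finset.mul_sum]
    refine mul_le_mul_of_nonneg_left ?_ (by linarith [hKnn, hε₁pos])
    have hρsum : ∑ i ∈ Finset.range (m+1), (Fraw T ψ (t i + κ) - Fraw T ψ (t i)) ≤ ε₂ := by
      have hcard : ∑ _i ∈ Finset.range (m+1), ε₂/((m:ℝ)+1) = ε₂ := by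
        rw [Finset.sum_const, Finset.card_range, nsmul_eq_mul]
        push_cast
        field_simp
      calc ∑ i ∈ Finset.range (m+1), (Fraw T ψ (t i + κ) - Fraw T ψ (t i))
          ≤ ∑ _i ∈ Finset.range (m+1), ε₂/((m:ℝ)+1) := by
            refine Finset.sum_le_sum fun i hi => ?_
            have him : i ≤ m := Nat.lt_succ_iff.mp (Finset.mem_range.mp hi)
            have := hFκ i him
            push_cast at this ⊢
            linarith
        _ = ε₂ := hcard
    have hsplit : ∑ i ∈ Finset.range m, (Fraw T ψ (t (i+1) + κ) - Fraw T ψ (t (i+1)))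
        ≤ ∑ i ∈ Finset.range (m+1), (Fraw T ψ (t i + κ) - Fraw T ψ (t i)) := by
      rw [Finset.sum_range_succ' (fun i => Fraw T ψ (t i + κ) - Fraw T ψ (t i)) m]
      have h0 : 0 ≤ Fraw T ψ (t 0 + κ) - Fraw T ψ (t 0) :=
        sub_nonneg.mpr (Fraw_mono hT hψ (by linarith))
      linarith
    linarith
  -- STEP 3 : compare to the integral
  have hν_Ioc : ∀ i : ℕ, (ν (Set.Ioc (t i) (t (i+1)))).toReal
      = Fraw T ψ (t (i+1)) - Fraw T ψ (t i) := by
    intro i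
    rw [hνdef, specMeasure_Ioc hT hψ, ENNReal.toReal_ofReal
      (sub_nonneg.mpr (Fraw_mono hT hψ (htmono (Nat.le_succ i))))]
  have hpiece : ∀ i : ℕ, i < m →
      (β i - 2*ε₁) * (Fraw T ψ (t (i+1)) - Fraw T ψ (t i))
        ≤ ∫ x in Set.Ioc (t i) (t (i+1)), (b x + K) ∂ν := by
    intro i hi
    have hmono_pt : ∀ x ∈ Set.Ioc (t i) (t (i+1)), β i - 2*ε₁ ≤ b x + K := by
      intro x hx
      obtain ⟨hx1, hx2⟩ := hx
      have hti := (htmem i (by omega)).1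
      have hti1 := (htmem (i+1) (by omega)).2
      have hxmem : x ∈ Set.Icc (-c-1) (c+1) := ⟨by linarith, by linarith⟩
      have hsucc := htsucc i
      have hdist : dist x (t (i+1)) ≤ δ := by
        rw [Real.dist_eq, abs_le]
        constructor <;> linarith
      have hbb := hδ x hxmem (t (i+1)) (hβmem i hi) hdist
      rw [Real.dist_eq, abs_le] at hbb
      simp only [hβ]
      linarith [hbb.1]
    calc (β i - 2*ε₁) * (Fraw T ψ (t (i+1)) - Fraw T ψ (t i))
        = (β i - 2*ε₁) * (ν (Set.Ioc (t i) (t (i+1)))).toReal := by rw [hν_Ioc i]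
      _ = ∫ _x in Set.Ioc (t i) (t (i+1)), (β i - 2*ε₁) ∂ν := by
          rw [MeasureTheory.setIntegral_const, smul_eq_mul, mul_comm]; rfl
      _ ≤ ∫ x in Set.Ioc (t i) (t (i+1)), (b x + K) ∂ν := by
          refine MeasureTheory.setIntegral_mono_on (integrableOn_const ?_)
            (hIntOn _ (hb.add continuous_const) _ _) measurableSet_Ioc hmono_pt
          exact (measure_lt_top ν _).ne
  have hIoc_sum : ∀ j : ℕ,
      ∑ i ∈ Finset.range j, ∫ x in Set.Ioc (t i) (t (i+1)), (b x + K) ∂ν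
        = ∫ x in Set.Ioc (t 0) (t j), (b x + K) ∂ν := by
    intro j
    induction j with
    | zero => simp
    | succ j ih =>
      rw [Finset.sum_range_succ, ih,
        ← MeasureTheory.setIntegral_union (f := fun x => b x + K) (Set.Ioc_disjoint_Ioc_of_le le_rfl) measurableSet_Ioc
          (hIntOn _ (hb.add continuous_const) _ _) (hIntOn _ (hb.add continuous_const) _ _),
        Set.Ioc_union_Ioc_eq_Ioc (htmono (Nat.zero_le j)) (htmono (Nat.le_succ j))]
  have hfull : ∫ x in Set.Ioc (t 0) (t m), (b x + K) ∂ν = (∫ x, b x ∂ν) + K := by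
    rw [ht0, htm]
    show ∫ x, (b x + K) ∂(ν.restrict (Set.Ioc (-c) c)) = _
    rw [hrestrict, MeasureTheory.integral_add hIntb (integrable_const K)]
    simp [MeasureTheory.integral_const]
  have hsum_nui : ∑ i ∈ Finset.range m, (Fraw T ψ (t (i+1)) - Fraw T ψ (t i)) = 1 := by
    rw [Finset.sum_range_sub (f := fun i => Fraw T ψ (t i)), ht0, htm,
      Fraw_eq_one hT hψ (by linarith), Fraw_eq_zero hT hψ (by linarith), sub_zero]
  have hstep3 : ∑ i ∈ Finset.range m, β i * (Fraw T ψ (t (i+1)) - Fraw T ψ (t i))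
      ≤ (∫ x, b x ∂ν) + K + 2*ε₁ := by
    have h1 : ∑ i ∈ Finset.range m, (β i - 2*ε₁) * (Fraw T ψ (t (i+1)) - Fraw T ψ (t i))
        ≤ ∫ x in Set.Ioc (t 0) (t m), (b x + K) ∂ν := by
      rw [← hIoc_sum m]
      exact Finset.sum_le_sum fun i hi => hpiece i (Finset.mem_range.mp hi)
    rw [hfull] at h1
    have h2 : ∑ i ∈ Finset.range m, β i * (Fraw T ψ (t (i+1)) - Fraw T ψ (t i))
        = ∑ i ∈ Finset.range m, (β i - 2*ε₁) * (Fraw T ψ (t (i+1)) - Fraw T ψ (t i))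
          + 2*ε₁ * ∑ i ∈ Finset.range m, (Fraw T ψ (t (i+1)) - Fraw T ψ (t i)) := by
      rw [Finset.mul_sum, ← Finset.sum_add_distrib]
      exact Finset.sum_congr rfl fun i _ => by ring
    rw [h2, hsum_nui]
    linarith
  -- collect the chain
  have hfinal : (2*K + ε₁) * ε₂ ≤ ε/4 := by
    have he : (2*K + ε₁) * ε₂ = ((2*K + ε₁) * ε) / (4*(2*K + ε₁) + 4) := by
      rw [hε₂]; ring
    rw [he, div_le_div_iff₀ (by positivity) (by norm_num : (0:ℝ) < 4)]
    nlinarith [hKnn, hε₁pos.le, hε.le]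
  have h2ε₁ : 2*ε₁ ≤ ε/2 := by rw [hε₁]; linarith
  linarith [hstep1, hstep2, hstep3]

lemma integral_phi_repr (b : ℝ → ℝ) (hb : Continuous b) :
    ∫ x, b x ∂(specF T ψ hT hψ).measure = phi T ψ b := by
  refine le_antisymm ?_ (phi_le_integral hT hψ b hb)
  have h1 := phi_le_integral hT hψ (fun x => - b x) hb.neg
  rw [phi_neg ψ hT, MeasureTheory.integral_neg] at h1
  linarith

lemma exists_specMeasure_raw :
    ∃ ν : Measure ℝ, IsProbabilityMeasure ν ∧
      ν (Set.Icc (-‖T‖) ‖T‖)ᶜ = 0 ∧ ∀ n : ℕ, ∫ r, r ^ n ∂ν = expVal (T ^ n) ψ := by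
  refine ⟨(specF T ψ hT hψ).measure, ⟨specMeasure_univ hT hψ⟩, specMeasure_compl_Icc hT hψ, ?_⟩
  intro n
  rw [integral_phi_repr hT hψ _ (continuous_pow n), phi, cfc_pow_id T n hT]


end Spec

section Glue

/-! ### glue lemmas -/

lemma selfAdj_ext {A B : H →L[ℂ] H} (hA : IsSelfAdjoint A) (hB : IsSelfAdjoint B)
    (h : ∀ ψ : H, ‖ψ‖ = 1 → expVal A ψ = expVal B ψ) : A = B := by
  have hD : IsSelfAdjoint (A - B) := hA.sub hB
  have key : ∀ x : H, @inner ℂ _ _ ((A - B) x) x = 0 := by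
    intro x
    rcases eq_or_ne x 0 with rfl | hx
    · simp
    · have hnx : ‖x‖ ≠ 0 := norm_ne_zero_iff.mpr hx
      have hψ1 : ‖((‖x‖:ℂ))⁻¹ • x‖ = 1 := by
        rw [norm_smul]; simp [hnx]
      set ψ : H := ((‖x‖:ℂ))⁻¹ • x with hψdef
      have h0 : expVal (A - B) ψ = 0 := by
        rw [expVal_sub]
        have := h ψ hψ1
        linarith
      have hradj := ContinuousLinearMap.adjoint_inner_left (A - B) ψ ψ
      rw [hD.adjoint_eq] at hradj
      have hconj : (starRingEnd ℂ) (@inner ℂ _ _ ψ ((A - B) ψ))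
          = @inner ℂ _ _ ψ ((A - B) ψ) := by
        rw [inner_conj_symm]
        exact hradj
      have him : (@inner ℂ _ _ ψ ((A - B) ψ)).im = 0 := Complex.conj_eq_iff_im.mp hconj
      have hz : @inner ℂ _ _ ψ ((A - B) ψ) = 0 := by
        have hre := h0
        simp only [expVal] at hre
        apply Complex.ext
        · simpa using hre
        · simpa using him
      have hxeq : ((‖x‖:ℂ)) • ψ = x := by
        rw [hψdef, smul_smul, mul_inv_cancel₀ (Complex.ofReal_ne_zero.mpr hnx), one_smul]
      calc @inner ℂ _ _ ((A-B) x) x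
          = @inner ℂ _ _ ((A-B) (((‖x‖:ℂ)) • ψ)) (((‖x‖:ℂ)) • ψ) := by rw [hxeq]
        _ = (starRingEnd ℂ) ((‖x‖:ℂ)) * (((‖x‖:ℂ)) * @inner ℂ _ _ ((A-B) ψ) ψ) := by
            rw [ContinuousLinearMap.map_smul, inner_smul_left, inner_smul_right]
        _ = 0 := by
            rw [← inner_conj_symm, hz]
            simp
  have hlin : ((A - B : H →L[ℂ] H) : H →ₗ[ℂ] H) = 0 :=
    (inner_map_self_eq_zero _).mp key
  have hAB : A - B = 0 := by
    ext x
    have := LinearMap.congr_fun hlin x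
    simpa using this
  exact sub_eq_zero.mp hAB

lemma line_measurable {f : H → ℝ} (hf : PseudoBorelFun f) {ψ : H} (hψ : ‖ψ‖ = 1) :
    Measurable (fun z : ℂ => f (z • ψ)) := fun B hB => hf B hB ψ hψ

lemma line_integrable {η : Measure ℂ} (hprob : IsProbabilityMeasure η) {f : H → ℝ}
    (hf : PseudoBorelFun f) (hEB : EssBddPB η f) {ψ : H} (hψ : ‖ψ‖ = 1) :
    Integrable (fun z : ℂ => f (z • ψ)) η := by
  obtain ⟨N, hN, C, hC⟩ := hEB
  refine Integrable.mono' (integrable_const C) (line_measurable hf hψ).aestronglyMeasurable ?_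
  have hnull : η ((fun z : ℂ => z • ψ) ⁻¹' N) = 0 := hN.2 ψ hψ
  rw [MeasureTheory.ae_iff]
  refine measure_mono_null (fun z hz => ?_) hnull
  simp only [Set.mem_setOf_eq, not_le] at hz
  by_contra hmem
  have := hC (z • ψ) hmem
  rw [Real.norm_eq_abs] at hz
  exact absurd this (by linarith)

lemma orthodox_unique {η : Measure ℂ} {f : H → ℝ} {A B : H →L[ℂ] H}
    (hA : OrthodoxMean η f A) (hB : OrthodoxMean η f B) : A = B :=
  selfAdj_ext hA.2.2.1 hB.2.2.1 fun ψ hψ => by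
    rw [← hA.2.2.2 ψ hψ, ← hB.2.2.2 ψ hψ]

lemma memB_sq : MemB (fun r : ℝ => r ^ 2) := by
  constructor
  · exact measurable_id.pow_const 2
  · intro s hs
    rw [isBounded_iff_forall_norm_le] at hs ⊢
    obtain ⟨C, hC⟩ := hs
    refine ⟨C^2, fun y hy => ?_⟩
    obtain ⟨x, hx, rfl⟩ := hy
    have h1 : |x| ≤ C := by
      have := hC x hx
      rwa [Real.norm_eq_abs] at this
    rw [Real.norm_eq_abs, abs_pow]
    exact pow_le_pow_left₀ (abs_nonneg x) h1 2

lemma exists_isSpecMeasure [Nontrivial H] (T : H →L[ℂ] H) (hT : IsSelfAdjoint T)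
    (ψ : H) (hψ : ‖ψ‖ = 1) : ∃ ν : Measure ℝ, IsSpecMeasure T ψ ν := by
  obtain ⟨ν, h1, h2, h3⟩ := exists_specMeasure_raw hT hψ
  exact ⟨ν, h1, h2, h3⟩

lemma hidden_sq {η : Measure ℂ} [Nontrivial H] {u : H → ℝ} {A W : H →L[ℂ] H}
    (hu : HiddenObs η u A) (hW : OrthodoxMean η (u * u) W) : W = A * A := by
  obtain ⟨S', hBFC, hOM⟩ := hu.2 (fun r => r ^ 2) memB_sq
  have hfn : (fun r : ℝ => r ^ 2) ∘ u = u * u := by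
    funext x
    simp [Function.comp, pow_two]
  rw [hfn] at hOM
  have hWS : W = S' := orthodox_unique hW hOM
  have hA : IsSelfAdjoint A := hu.1.2.2.1
  have hS'A2 : S' = A * A := by
    refine selfAdj_ext hBFC.1 (by simpa [pow_two] using hA.pow 2) fun ψ hψ => ?_
    obtain ⟨ν, hν⟩ := exists_isSpecMeasure A hA ψ hψ
    rw [← hBFC.2 ψ hψ ν hν, hν.2.2 2, pow_two]
  rw [hWS, hS'A2]

lemma orthodox_add {η : Measure ℂ} (hprob : IsProbabilityMeasure η) {u v : H → ℝ}
    {A B W : H →L[ℂ] H} (hu : OrthodoxMean η u A) (hv : OrthodoxMean η v B)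
    (hW : OrthodoxMean η (u + v) W) : W = A + B := by
  refine selfAdj_ext hW.2.2.1 (hu.2.2.1.add hv.2.2.1) fun ψ hψ => ?_
  rw [← hW.2.2.2 ψ hψ, expVal_add, ← hu.2.2.2 ψ hψ, ← hv.2.2.2 ψ hψ]
  simp only [lineIntegral, Pi.add_apply]
  exact MeasureTheory.integral_add (line_integrable hprob hu.1 hu.2.1 hψ)
    (line_integrable hprob hv.1 hv.2.1 hψ)

end Glue

variable [TopologicalSpace.SeparableSpace H]

theorem stmt9 (hdim : ¬ FiniteDimensional ℂ H) (η : Measure ℂ) (hη : IsEta η)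
    (C : Set (H → ℝ))
    (hadd : ∀ f ∈ C, ∀ g ∈ C, f + g ∈ C)
    (hmul : ∀ f ∈ C, ∀ g ∈ C, f * g ∈ C)
    (hsmul : ∀ (r : ℝ), ∀ f ∈ C, r • f ∈ C)
    (hcomp : ∀ f ∈ C, ∀ b : ℝ → ℝ, MemB b → b ∘ f ∈ C) :
    (¬ ∀ f ∈ C, IsHiddenObs η f) ∨
      ∀ f ∈ C, ∀ g ∈ C, ∀ T S : H →L[ℂ] H,
        HiddenObs η f T → HiddenObs η g S → T * S = S * T := by
  by_cases hall : ∀ f ∈ C, IsHiddenObs η f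
  · right
    haveI hprob : IsProbabilityMeasure η := hη.1
    haveI hnt : Nontrivial H := by
      by_contra hns
      rw [not_nontrivial_iff_subsingleton] at hns
      exact hdim (Module.Finite.of_basis (Module.Basis.empty (ι := Fin 0) H))
    -- Jordan relation :  A*B + B*A = 2·σ(uv)
    have jordan : ∀ u ∈ C, ∀ v ∈ C, ∀ A B W : H →L[ℂ] H, HiddenObs η u A →
        HiddenObs η v B → OrthodoxMean η (u * v) W → A * B + B * A = W + W := by
      intro u hu v hv A B W hA hB hW
      obtain ⟨Q, hQ⟩ := hall (u + v) (hadd u hu v hv)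
      have hQval : Q = A + B := orthodox_add hprob hA.1 hB.1 hQ.1
      obtain ⟨W2, hW2⟩ := hall ((u+v)*(u+v)) (hmul _ (hadd u hu v hv) _ (hadd u hu v hv))
      have hW2val : W2 = Q * Q := hidden_sq hQ hW2.1
      obtain ⟨Wu, hWu⟩ := hall (u*u) (hmul u hu u hu)
      have hWuval : Wu = A * A := hidden_sq hA hWu.1
      obtain ⟨Wv, hWv⟩ := hall (v*v) (hmul v hv v hv)
      have hWvval : Wv = B * B := hidden_sq hB hWv.1
      -- expectation-value identity
      have hexp : ∀ ψ : H, ‖ψ‖ = 1 →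
          expVal W2 ψ = expVal Wu ψ + 2 * expVal W ψ + expVal Wv ψ := by
        intro ψ hψ
        have h2 := hW2.1.2.2.2 ψ hψ
        have hu2 := hWu.1.2.2.2 ψ hψ
        have hv2 := hWv.1.2.2.2 ψ hψ
        have hw := hW.2.2.2 ψ hψ
        have hfuneq : (u+v)*(u+v) = u*u + (u*v + (u*v + v*v)) := by
          funext x
          simp only [Pi.mul_apply, Pi.add_apply]
          ring
        rw [hfuneq] at h2
        have hiu := line_integrable hprob hWu.1.1 hWu.1.2.1 hψ
        have hiw := line_integrable hprob hW.1 hW.2.1 hψ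
        have hiv := line_integrable hprob hWv.1.1 hWv.1.2.1 hψ
        have hsplit : lineIntegral η (u*u + (u*v + (u*v + v*v))) ψ
            = lineIntegral η (u*u) ψ + (lineIntegral η (u*v) ψ
              + (lineIntegral η (u*v) ψ + lineIntegral η (v*v) ψ)) := by
          have h23 : Integrable (fun z : ℂ => (u*v) (z • ψ) + (v*v) (z • ψ)) η :=
            hiw.add hiv
          have h223 : Integrable
              (fun z : ℂ => (u*v) (z • ψ) + ((u*v) (z • ψ) + (v*v) (z • ψ))) η :=
            hiw.add h23
          show (∫ z : ℂ, ((u*u) (z • ψ) + ((u*v) (z • ψ)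
            + ((u*v) (z • ψ) + (v*v) (z • ψ)))) ∂η) = _
          rw [MeasureTheory.integral_add hiu h223, MeasureTheory.integral_add hiw h23,
            MeasureTheory.integral_add hiw hiv]
          rfl
        rw [hsplit] at h2
        rw [hu2, hw, hv2] at h2
        linarith
      have hop : W2 = Wu + (W + W) + Wv := by
        refine selfAdj_ext hW2.1.2.2.1
          ((hWu.1.2.2.1.add (hW.2.2.1.add hW.2.2.1)).add hWv.1.2.2.1) fun ψ hψ => ?_
        rw [hexp ψ hψ, expVal_add, expVal_add, expVal_add]
        ring
      rw [hQval] at hW2val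
      rw [hW2val, hWuval, hWvval] at hop
      -- hop : (A+B)*(A+B) = A*A + (W+W) + B*B
      have hx : A*B + B*A - (W + W) = (A+B)*(A+B) - (A*A + (W + W) + B*B) := by
        noncomm_ring
      rw [hop, sub_self] at hx
      exact sub_eq_zero.mp hx
    -- the commutator commutes with each factor
    have comm1 : ∀ u ∈ C, ∀ v ∈ C, ∀ A B : H →L[ℂ] H, HiddenObs η u A → HiddenObs η v B →
        A * (A * B - B * A) = (A * B - B * A) * A := by
      intro u hu v hv A B hA hB
      obtain ⟨P, hP⟩ := hall (u*v) (hmul u hu v hv)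
      have e1 : A * B + B * A = P + P := jordan u hu v hv A B P hA hB hP.1
      obtain ⟨W1, hW1⟩ := hall (u*(u*v)) (hmul u hu _ (hmul u hu v hv))
      have e2 : A * P + P * A = W1 + W1 :=
        jordan u hu (u*v) (hmul u hu v hv) A P W1 hA hP hW1.1
      obtain ⟨Wuu, hWuu⟩ := hall (u*u) (hmul u hu u hu)
      have hWuuval : Wuu = A * A := hidden_sq hA hWuu.1
      obtain ⟨W2, hW2⟩ := hall ((u*u)*v) (hmul _ (hmul u hu u hu) v hv)
      have e3 : Wuu * B + B * Wuu = W2 + W2 :=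
        jordan (u*u) (hmul u hu u hu) v hv Wuu B W2 hWuu hB hW2.1
      rw [hWuuval] at e3
      have hW12 : W1 = W2 := by
        have h := hW2.1
        rw [mul_assoc] at h
        exact orthodox_unique hW1.1 h
      have hE : A*(A*B + B*A) + (A*B + B*A)*A = (A*A*B + B*(A*A)) + (A*A*B + B*(A*A)) := by
        calc A*(A*B + B*A) + (A*B + B*A)*A = A*(P+P) + (P+P)*A := by rw [e1]
          _ = (A*P + P*A) + (A*P + P*A) := by noncomm_ring
          _ = (W1 + W1) + (W1 + W1) := by rw [e2]
          _ = (W2 + W2) + (W2 + W2) := by rw [hW12]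
          _ = (A*A*B + B*(A*A)) + (A*A*B + B*(A*A)) := by rw [← e3]
      have hgoal : A*(A*B - B*A) - (A*B - B*A)*A
          = ((A*A*B + B*(A*A)) + (A*A*B + B*(A*A)))
            - (A*(A*B + B*A) + (A*B + B*A)*A) := by
        noncomm_ring
      rw [← hE, sub_self] at hgoal
      exact sub_eq_zero.mp hgoal
    intro f hf g hg T S hT hS
    exact comm_eq_of_comm_commutator hT.1.2.2.1 hS.1.2.2.1 (comm1 f hf g hg T S hT hS)
  · exact Or.inl hall



end HiddenVar
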